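/- Let S be a binary string of length m, $ ∉ {0,1}, and i ∈ [1..m]. The string B = S $ S[..i-1] 1 ends with an occurrence of a rotation of A = S $ (i.e., some rotation of A is a suffix of B) if and only if S[i] = 1. -/

import Mathlib

/-- `P` occurs at (0-indexed) position `i` of `T`. -/
def occursAt {α : Type*} (P T : List α) (i : ℕ) : Prop :=
  (T.drop i).take P.length = P

/-- `ρ` is a period of `P`. -/
def isPeriod {α : Type*} (P : List α) (ρ : ℕ) : Prop :=
  0 < ρ ∧ ∀ k, k + ρ < P.length → P[k]? = P[k + ρ]?

/-- The smallest period of `P`. -/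
noncomputable def per {α : Type*} (P : List α) : ℕ :=
  sInf {ρ | isPeriod P ρ}

/-- The fragment of `S` on (0-indexed, inclusive) positions `i..j`. -/
def frag {α : Type*} (S : List α) (i j : ℕ) : List α :=
  (S.drop i).take (j - i + 1)

/-- For a binary string `S` of length `m` (letters `0` and `1`, with `2` playing
the role of the separator $) and `i ∈ [1..m]`: some rotation of `A = S $` is a
suffix of `B = S $ S[..i-1] 1` iff `S[i] = 1`. -/
theorem cpm_augmented_index (S : List (Fin 3)) (hS : ∀ c ∈ S, c = 0 ∨ c = 1)
    (m : ℕ) (hm : S.length = m) (i : ℕ) (hi1 : 1 ≤ i) (hi2 : i ≤ m) :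
    (∃ Δ < (S ++ [2]).length,
        ((S ++ [2]).drop Δ ++ (S ++ [2]).take Δ) <:+ (S ++ [2] ++ S.take (i - 1) ++ [1]))
      ↔ S[i - 1]? = some 1 := by
  subst hm
  have hi2' : i ≤ S.length := hi2
  have hdropA : (S ++ [2]).drop i = S.drop i ++ [2] :=
    List.drop_append_of_le_length hi2'
  have htakeA : (S ++ [2]).take i = S.take i :=
    List.take_append_of_le_length hi2'
  have hBdrop : (S ++ [2] ++ S.take (i - 1) ++ [1]).drop i
      = S.drop i ++ ([2] ++ (S.take (i-1) ++ [1])) := by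
    have : S ++ [2] ++ S.take (i - 1) ++ [1]
        = S ++ ([2] ++ (S.take (i-1) ++ [1])) := by simp
    rw [this, List.drop_append_of_le_length hi2']
  constructor
  · rintro ⟨Δ, hΔ, t, ht⟩
    have hΔ' : Δ ≤ S.length := by simpa using Nat.lt_succ_iff.mp (by simpa using hΔ)
    have hlt : t.length = i := by
      have := congrArg List.length ht
      simp [Nat.min_eq_left hΔ'] at this
      omega
    have hrot : (S ++ [2]).drop Δ ++ (S ++ [2]).take Δ
        = S.drop i ++ ([2] ++ (S.take (i-1) ++ [1])) := by
      rw [← hBdrop, ← ht, ← hlt, List.drop_left]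
    have hR : (S.drop i ++ ([2] ++ (S.take (i-1) ++ [1])))[S.length - i]? = some 2 := by
      rw [List.getElem?_append_right (by simp [Nat.min_eq_left hi2'])]
      simp [Nat.min_eq_left hi2']
    have hnot2 : ∀ k, k < S.length → (S ++ [2])[k]? ≠ some 2 := by
      intro k hk h2
      rw [List.getElem?_append, if_pos (by simpa using hk)] at h2
      rcases hS (2 : Fin 3) (List.mem_of_getElem? h2) with h | h <;> exact absurd h (by decide)
    have hΔi : Δ = i := by
      have hL := hrot ▸ hR
      by_contra hne
      rcases Nat.lt_or_ge Δ i with hcase | hcase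
      · have hlen : S.length - i < ((S ++ [2]).drop Δ).length := by simp; omega
        rw [List.getElem?_append, if_pos hlen, List.getElem?_drop] at hL
        exact hnot2 _ (by omega) hL
      · have hΔgt : i < Δ := lt_of_le_of_ne hcase (Ne.symm hne)
        have hlen2 : ((S ++ [2]).drop Δ).length = S.length + 1 - Δ := by simp
        rw [List.getElem?_append, if_neg (by rw [hlen2]; omega), hlen2,
          List.take_append_of_le_length hΔ', List.getElem?_take,
          if_pos (by omega)] at hL
        have hidx : S[S.length - i - (S.length + 1 - Δ)]? = some 2 := hL
        rcases hS (2 : Fin 3) (List.mem_of_getElem? hidx) with h | h <;> exact absurd h (by decide)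
    subst hΔi
    rw [hdropA, htakeA, List.append_assoc] at hrot
    have h2 : S.take Δ = S.take (Δ - 1) ++ [1] := List.append_cancel_left (List.append_cancel_left hrot)
    have h3 : S.take Δ = S.take (Δ - 1) ++ (S[Δ-1]?).toList := by
      have : Δ = (Δ - 1) + 1 := by omega
      rw [this, List.take_succ]; simp
    rw [h3] at h2
    have h4 : (S[Δ-1]?).toList = [1] := List.append_cancel_left h2
    cases hx : S[Δ-1]? with
    | none => rw [hx] at h4; simp at h4
    | some a => rw [hx] at h4; simp at h4; rw [h4]
  · intro h
    refine ⟨i, by simp; omega, S.take i, ?_⟩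
    rw [hdropA, htakeA]
    have htk : S.take i = S.take (i-1) ++ [1] := by
      have hi : i = (i - 1) + 1 := by omega
      rw [hi, List.take_succ]
      simp [h]
    calc S.take i ++ ((S.drop i ++ [2]) ++ S.take i)
        = S.take i ++ S.drop i ++ [2] ++ (S.take (i-1) ++ [1]) := by rw [htk]; simp
      _ = S ++ [2] ++ S.take (i - 1) ++ [1] := by rw [List.take_append_drop]; simp
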